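/- arXiv:2209.12695 — 2 statements merged into one kernel-verified Lean document; each statement's English description precedes it below -/
import Mathlib

section
/- Let L = {k₁ > ... > k_m} be a level datum with ramification indices r₁ < ... < r_m (r₀ = 1) and write k_i = p_i/d_i in lowest terms. Then the number of non-integral admissible exponents of L equals Σ_{i=1}^m (r_i·k_i − ⌊r_{i−1}·k_i⌋), where all the r_i·k_i are integers. -/
lemma den_dvd_iff' {r : ℕ} (hr : 0 < r) (x : ℚ) :
    x.den ∣ r ↔ ∃ z : ℤ, x = (z : ℚ) / r := by
  constructor
  · rintro ⟨c, hc⟩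
    have hc0 : (c : ℚ) ≠ 0 := by
      rintro h
      rw [show c = 0 by exact_mod_cast h, mul_zero] at hc
      omega
    refine ⟨x.num * c, ?_⟩
    rw [hc]
    push_cast
    rw [mul_div_assoc, mul_comm (x.den : ℚ) (c : ℚ), div_mul_cancel_left₀ hc0,
      ← div_eq_mul_inv, Rat.num_div_den]
  · rintro ⟨z, rfl⟩
    have h := Rat.den_dvd z (r : ℤ)
    rw [Rat.divInt_eq_div] at h
    exact_mod_cast h

noncomputable def Gfin (r : ℕ) (b : ℚ) : Finset ℚ :=
  (Finset.Ioc (0:ℤ) ⌊(r:ℚ)*b⌋).image (fun z : ℤ => (z:ℚ)/r)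

lemma mem_Gfin {r : ℕ} (hr : 0 < r) (b x : ℚ) :
    x ∈ Gfin r b ↔ 0 < x ∧ x ≤ b ∧ x.den ∣ r := by
  have hr' : (0:ℚ) < r := by exact_mod_cast hr
  simp only [Gfin, Finset.mem_image, Finset.mem_Ioc]
  constructor
  · rintro ⟨z, ⟨hz0, hz1⟩, rfl⟩
    have hz0' : (0:ℚ) < z := by exact_mod_cast hz0
    refine ⟨div_pos hz0' hr', ?_, (den_dvd_iff' hr _).2 ⟨z, rfl⟩⟩
    rw [div_le_iff₀ hr']
    calc (z:ℚ) ≤ (⌊(r:ℚ)*b⌋ : ℚ) := by exact_mod_cast hz1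
      _ ≤ (r:ℚ)*b := Int.floor_le _
      _ = b * r := mul_comm _ _
  · rintro ⟨hx0, hxb, hd⟩
    obtain ⟨z, rfl⟩ := (den_dvd_iff' hr x).1 hd
    have hz0 : 0 < z := by
      by_contra h
      push_neg at h
      have : (z:ℚ) ≤ 0 := by exact_mod_cast h
      have := div_nonpos_of_nonpos_of_nonneg this hr'.le
      linarith
    refine ⟨z, ⟨hz0, ?_⟩, rfl⟩
    rw [Int.le_floor]
    rw [div_le_iff₀ hr'] at hxb
    linarith [hxb]

lemma card_Gfin {r : ℕ} (hr : 0 < r) (b : ℚ) :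
    (Gfin r b).card = ⌊(r:ℚ)*b⌋.toNat := by
  have hr' : (0:ℚ) < r := by exact_mod_cast hr
  rw [Gfin, Finset.card_image_of_injective, Int.card_Ioc]
  · simp
  · intro a b h
    field_simp at h
    exact_mod_cast h

/-- The number of non-integral admissible exponents of a level datum
`k₁ > ⋯ > k_m` with ramification indices `r_i = R (i+1)` (and `r₀ = R 0 = 1`)
equals `∑ (r_i k_i − ⌊r_{i−1} k_i⌋)`, and moreover each `r_i·k_i` is an integer. -/
theorem card_nonintegral_admissible_exponents (m : ℕ) (hm : 1 ≤ m)
    (k : Fin m → ℚ) (hkpos : ∀ i, 0 < k i) (hanti : StrictAnti k)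
    (R : ℕ → ℕ) (hR0 : R 0 = 1)
    (hR : ∀ i : Fin m, R (i + 1) = Nat.lcm (R i) (k i).den)
    (hmono : ∀ i : Fin m, R i < R (i + 1))
    (A : Set ℚ)
    (hA : A = {x : ℚ | ∃ n : ℕ, 0 < n ∧ x = n} ∪
      ⋃ i : Fin m, {x : ℚ | 0 < x ∧ x ≤ k i ∧ ∃ n : ℕ, x = (n : ℚ) / R (i + 1)}) :
    (∀ i : Fin m, ((R (i + 1) : ℚ) * k i).den = 1) ∧
    ((Set.ncard {x : ℚ | x ∈ A ∧ x.den ≠ 1} : ℚ) =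
      ∑ i : Fin m, ((R (i + 1) : ℚ) * k i - (⌊(R (i : ℕ) : ℚ) * k i⌋ : ℚ))) := by
  -- positivity of R on [0, m]
  have Rpos : ∀ b : ℕ, b ≤ m → 0 < R b := by
    intro b hb
    cases b with
    | zero => omega
    | succ n =>
      have := hmono ⟨n, by omega⟩
      simp only [Fin.val_mk] at this
      omega
  -- divisibility chain
  have Rdvd : ∀ a b : ℕ, a ≤ b → b ≤ m → R a ∣ R b := by
    intro a b hab hbm
    induction b with
    | zero =>
      have : a = 0 := by omega
      subst this; exact dvd_rfl
    | succ n ih =>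
      rcases Nat.eq_or_lt_of_le hab with rfl | h
      · exact dvd_rfl
      · have h1 := hR ⟨n, by omega⟩
        simp only [Fin.val_mk] at h1
        exact (ih (by omega) (by omega)).trans (h1 ▸ Nat.dvd_lcm_left _ _)
  have hden : ∀ i : Fin m, (k i).den ∣ R (i + 1) := by
    intro i
    rw [hR i]
    exact Nat.dvd_lcm_right _ _
  have hRp : ∀ i : Fin m, 0 < R ((i:ℕ) + 1) := fun i => Rpos _ (by omega)
  have hRp' : ∀ i : Fin m, 0 < R (i:ℕ) := fun i => Rpos _ (by omega)
  -- integer witnesses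
  have hint : ∀ i : Fin m, ∃ z : ℤ, (R ((i:ℕ) + 1) : ℚ) * k i = (z : ℚ) := by
    intro i
    obtain ⟨z, hz⟩ := (den_dvd_iff' (hRp i) (k i)).1 (hden i)
    refine ⟨z, ?_⟩
    rw [hz, mul_div_cancel₀]
    exact_mod_cast (hRp i).ne'
  have part1 : ∀ i : Fin m, ((R (i + 1) : ℚ) * k i).den = 1 := by
    intro i
    obtain ⟨z, hz⟩ := hint i
    rw [hz, Rat.den_intCast]
  refine ⟨part1, ?_⟩
  -- the finsets
  set F : Fin m → Finset ℚ :=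
    fun i => Gfin (R ((i:ℕ)+1)) (k i) \ Gfin (R (i:ℕ)) (k i) with hF
  have memF : ∀ (i : Fin m) (x : ℚ),
      x ∈ F i ↔ (0 < x ∧ x ≤ k i ∧ (x.den ∣ R ((i:ℕ)+1))) ∧ ¬ x.den ∣ R (i:ℕ) := by
    intro i x
    rw [hF]
    simp only [Finset.mem_sdiff, mem_Gfin (hRp i), mem_Gfin (hRp' i)]
    tauto
  -- set equality
  have hSeq : {x : ℚ | x ∈ A ∧ x.den ≠ 1} = ↑(Finset.univ.biUnion F) := by
    ext x
    simp only [Set.mem_setOf_eq, Finset.coe_biUnion, Finset.coe_univ, Set.mem_iUnion,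
      Finset.mem_coe, Set.mem_univ, Set.iUnion_true]
    constructor
    · rintro ⟨hxA, hxd⟩
      rw [hA] at hxA
      rcases hxA with hxI | hxU
      · obtain ⟨n, _, rfl⟩ := hxI
        simp at hxd
      · simp only [Set.mem_iUnion, Set.mem_setOf_eq] at hxU
        obtain ⟨i, hx0, hxk, n, hxn⟩ := hxU
        have hdvd : x.den ∣ R ((i:ℕ)+1) :=
          (den_dvd_iff' (hRp i) x).2 ⟨(n:ℤ), by rw [hxn]; norm_num⟩
        have hex : ∃ j : ℕ, j < m ∧ x.den ∣ R (j+1) := ⟨i, i.2, hdvd⟩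
        obtain ⟨hj₀m, hj₀d⟩ := Nat.find_spec hex
        have hj₀le : Nat.find hex ≤ (i:ℕ) := Nat.find_le ⟨i.2, hdvd⟩
        refine ⟨⟨Nat.find hex, hj₀m⟩, (memF _ _).2 ⟨⟨hx0, ?_, hj₀d⟩, ?_⟩⟩
        · exact hxk.trans (hanti.antitone
            (show (⟨Nat.find hex, hj₀m⟩ : Fin m) ≤ i from hj₀le))
        · simp only [Fin.val_mk]
          rcases Nat.eq_zero_or_pos (Nat.find hex) with h0 | h0
          · rw [h0, hR0, Nat.dvd_one]
            exact hxd
          · have hmin := Nat.find_min hex (m := Nat.find hex - 1) (by omega)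
            push_neg at hmin
            have h2 := hmin (by omega)
            have h3 : Nat.find hex - 1 + 1 = Nat.find hex := by omega
            rwa [h3] at h2
    · rintro ⟨i, hxF⟩
      obtain ⟨⟨hx0, hxk, hdvd⟩, hndvd⟩ := (memF i x).1 hxF
      refine ⟨?_, fun h => hndvd (h ▸ one_dvd _)⟩
      rw [hA]
      right
      simp only [Set.mem_iUnion, Set.mem_setOf_eq]
      obtain ⟨z, hz⟩ := (den_dvd_iff' (hRp i) x).1 hdvd
      have hz0 : 0 < z := by
        by_contra h
        push_neg at h
        have h1 : (z:ℚ) ≤ 0 := by exact_mod_cast h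
        have h2 : (0:ℚ) < R ((i:ℕ)+1) := by exact_mod_cast hRp i
        nlinarith [hz ▸ hx0, div_nonpos_of_nonpos_of_nonneg h1 h2.le]
      exact ⟨i, hx0, hxk, z.toNat, by rw [hz]; congr 1; exact_mod_cast (Int.toNat_of_nonneg hz0.le).symm⟩
  rw [hSeq, Set.ncard_coe_finset]
  -- disjointness
  have hdisj : ∀ i ∈ Finset.univ, ∀ j ∈ Finset.univ, i ≠ j →
      Disjoint (F i) (F j) := by
    have key : ∀ i j : Fin m, i < j → Disjoint (F i) (F j) := by
      intro i j hij
      rw [Finset.disjoint_left]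
      intro x hxi hxj
      obtain ⟨⟨_, _, hdvd⟩, _⟩ := (memF i x).1 hxi
      obtain ⟨_, hndvd⟩ := (memF j x).1 hxj
      exact hndvd (hdvd.trans (Rdvd _ _ (by omega) (by omega)))
    intro i _ j _ hij
    rcases lt_or_gt_of_ne hij with h | h
    · exact key i j h
    · exact (key j i h).symm
  rw [Finset.card_biUnion hdisj]
  -- cardinality of each piece
  have hsub : ∀ i : Fin m, Gfin (R (i:ℕ)) (k i) ⊆ Gfin (R ((i:ℕ)+1)) (k i) := by
    intro i x hx
    rw [mem_Gfin (hRp' i)] at hx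
    rw [mem_Gfin (hRp i)]
    exact ⟨hx.1, hx.2.1, hx.2.2.trans (Rdvd _ _ (by omega) (by omega))⟩
  have hcard : ∀ i : Fin m,
      (F i).card = ⌊(R ((i:ℕ)+1) : ℚ) * k i⌋.toNat - ⌊(R (i:ℕ) : ℚ) * k i⌋.toNat := by
    intro i
    rw [hF]
    rw [Finset.card_sdiff_of_subset (hsub i), card_Gfin (hRp i), card_Gfin (hRp' i)]
  push_cast [hcard]
  refine Finset.sum_congr rfl fun i _ => ?_
  have hle : ⌊(R (i:ℕ) : ℚ) * k i⌋ ≤ ⌊(R ((i:ℕ)+1) : ℚ) * k i⌋ := by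
    apply Int.floor_le_floor
    have : (R (i:ℕ) : ℚ) ≤ (R ((i:ℕ)+1) : ℚ) := by exact_mod_cast (hmono i).le
    nlinarith [hkpos i]
  have hnn : 0 ≤ ⌊(R (i:ℕ) : ℚ) * k i⌋ := by
    apply Int.floor_nonneg.2
    have : (0:ℚ) < R (i:ℕ) := by exact_mod_cast hRp' i
    nlinarith [hkpos i]
  obtain ⟨z, hz⟩ := hint i
  have hfl : (⌊(R ((i:ℕ)+1) : ℚ) * k i⌋ : ℚ) = (R ((i:ℕ)+1) : ℚ) * k i := by
    rw [hz, Int.floor_intCast]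
  rw [Nat.cast_sub (Int.toNat_le_toNat hle)]
  have e1 : ((⌊(R ((i:ℕ)+1) : ℚ) * k i⌋.toNat : ℕ) : ℚ) = (⌊(R ((i:ℕ)+1) : ℚ) * k i⌋ : ℚ) := by
    exact_mod_cast Int.toNat_of_nonneg (hnn.trans hle)
  have e2 : ((⌊(R (i:ℕ) : ℚ) * k i⌋.toNat : ℕ) : ℚ) = (⌊(R (i:ℕ) : ℚ) * k i⌋ : ℚ) := by
    exact_mod_cast Int.toNat_of_nonneg hnn
  rw [e1, e2, hfl]
end

section
/- Let r, m be positive integers with m dividing r. Let q ∈ ℂ[t] (t = x^{1/r}) be a polynomial all of whose exponents, as powers of x, are greater than k = s/m (s coprime to m), with ram(q) = r in the sense that the gcd of r and the t-exponents of q is 1. For a, b ∈ ℂ set q_a = q + a x^k and q_b = q + b x^k. Then the Galois orbits {q_a(ζ^j t)} and {q_b(ζ^j t)} (ζ = exp(2πi/r), j = 0,...,r−1) are disjoint if and only if a ≠ b. -/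
set_option maxHeartbeats 1000000

open Polynomial in
lemma coeff_comp_C_mul_X (p : Polynomial ℂ) (c : ℂ) (n : ℕ) :
    (p.comp (C c * X)).coeff n = p.coeff n * c ^ n := by
  induction p using Polynomial.induction_on' with
  | add p q hp hq => simp [add_comp, hp, hq, add_mul]
  | monomial i t =>
      simp only [monomial_comp, mul_pow, ← C_pow, ← mul_assoc, ← C_mul]
      rw [C_mul_X_pow_eq_monomial, coeff_monomial, coeff_monomial]
      split_ifs with h
      · subst h; ring
      · simp

open Polynomial in
/-- Case 1 of the fission condition: when `m ∣ r`, the Galois orbits of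
`q + a x^{s/m}` and `q + b x^{s/m}` (as polynomials in `t = x^{1/r}`) are
disjoint iff `a ≠ b`. -/
theorem fission_case_one (r m s : ℕ) (hr : 0 < r) (hm : 0 < m) (hmr : m ∣ r)
    (hs : 0 < s) (hsm : Nat.Coprime s m)
    (q : Polynomial ℂ)
    (hexp : ∀ j ∈ q.support, s * r < j * m)
    (hram : Nat.gcd r (q.support.gcd id) = 1)
    (ζ : ℂ) (hζ : ζ = Complex.exp (2 * Real.pi * Complex.I / r))
    (a b : ℂ) :
    Disjoint
      ((Finset.range r).image (fun j => (q + C a * X ^ (s * r / m)).comp (C (ζ ^ j) * X)))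
      ((Finset.range r).image (fun j => (q + C b * X ^ (s * r / m)).comp (C (ζ ^ j) * X)))
      ↔ a ≠ b := by
  have hprim : IsPrimitiveRoot ζ r := hζ ▸ Complex.isPrimitiveRoot_exp r hr.ne'
  have hord : orderOf ζ = r := hprim.eq_orderOf.symm
  set k := s * r / m with hk
  have hkm : k * m = s * r := Nat.div_mul_cancel (Dvd.dvd.mul_left hmr s)
  have hqk : q.coeff k = 0 := by
    by_contra h
    have := hexp k (Polynomial.mem_support_iff.mpr h)
    omega
  constructor
  · intro hdisj hab
    subst hab
    have hmem : (q + C a * X ^ k).comp (C (ζ ^ 0) * X) ∈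
        (Finset.range r).image (fun j => (q + C a * X ^ k).comp (C (ζ ^ j) * X)) :=
      Finset.mem_image_of_mem _ (Finset.mem_range.mpr hr)
    exact (Finset.disjoint_left.mp hdisj hmem) hmem
  · intro hab
    rw [Finset.disjoint_left]
    rintro p hp hp'
    obtain ⟨i, hi, rfl⟩ := Finset.mem_image.mp hp
    obtain ⟨j, hj, heq⟩ := Finset.mem_image.mp hp'
    have key : ∀ n : ℕ, ((q + C b * X ^ k).coeff n) * (ζ ^ j) ^ n
        = ((q + C a * X ^ k).coeff n) * (ζ ^ i) ^ n := by
      intro n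
      rw [← coeff_comp_C_mul_X, ← coeff_comp_C_mul_X, heq]
    have hne : ζ ≠ 0 := hprim.ne_zero hr.ne'
    -- on the support of q
    have hmod : ∀ n ∈ q.support, (r : ℤ) ∣ ((j : ℤ) - i) * n := by
      intro n hn
      have hkn : n ≠ k := by
        intro h; exact (Polynomial.mem_support_iff.mp hn) (h ▸ hqk)
      have h1 := key n
      rw [coeff_add, coeff_add, coeff_C_mul, coeff_C_mul, coeff_X_pow,
        if_neg hkn, mul_zero, add_zero, mul_zero, add_zero] at h1
      have h2 : ζ ^ (j * n) = ζ ^ (i * n) := by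
        rw [pow_mul, pow_mul]
        exact mul_left_cancel₀ (Polynomial.mem_support_iff.mp hn) h1
      have h3 : ζ ^ (((j : ℤ) - i) * n) = 1 := by
        have : ((j : ℤ) - i) * n = (j * n : ℕ) - (i * n : ℕ) := by push_cast; ring
        rw [this, zpow_sub₀ hne, zpow_natCast, zpow_natCast, h2, div_self]
        exact pow_ne_zero _ hne
      exact (hprim.zpow_eq_one_iff_dvd _).mp h3
    -- deduce ζ^i = ζ^j
    have hzij : ζ ^ j = ζ ^ i := by
      have hdn : ∀ n ∈ q.support, r ∣ ((j : ℤ) - i).natAbs * n := by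
        intro n hn
        have h4 := Int.natAbs_dvd_natAbs.mpr (hmod n hn)
        simpa [Int.natAbs_mul] using h4
      have hdg : r ∣ ((j : ℤ) - i).natAbs * q.support.gcd id := by
        have heqg : (q.support.gcd fun n => ((j : ℤ) - i).natAbs * n)
            = ((j : ℤ) - i).natAbs * q.support.gcd id := by
          simpa using (Finset.gcd_mul_left (s := q.support)
            (f := id) (a := ((j : ℤ) - i).natAbs))
        rw [← heqg]
        exact Finset.dvd_gcd fun n hn => hdn n hn
      have hcop : Nat.Coprime r (q.support.gcd id) := hram
      have hdv : r ∣ ((j : ℤ) - i).natAbs := hcop.dvd_of_dvd_mul_right hdg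
      have hdvz : (r : ℤ) ∣ (j : ℤ) - i := Int.dvd_natAbs.mp (Int.ofNat_dvd.mpr hdv)
      have h5 : ζ ^ ((j : ℤ) - i) = 1 := (hprim.zpow_eq_one_iff_dvd _).mpr hdvz
      rw [zpow_sub₀ hne, zpow_natCast, zpow_natCast, div_eq_one_iff_eq
        (pow_ne_zero _ hne)] at h5
      exact h5
    -- at n = k : a = b
    have hk1 := key k
    rw [coeff_add, coeff_add, coeff_C_mul, coeff_C_mul, coeff_X_pow, if_pos rfl,
      mul_one, mul_one, hqk, zero_add, zero_add, hzij] at hk1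
    have hzk : (ζ ^ i) ^ k ≠ 0 := pow_ne_zero _ (pow_ne_zero _ hne)
    exact hab (mul_right_cancel₀ hzk hk1).symm
end
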